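/- Let G be a finite connected block graph with at least two blocks. Then the set of special vertices of G is exactly D1 ∪ D2, no special vertex of G has a true twin other than itself, and hence D1 ∪ D2 is the unique S(G)-set of G; where D1 is the set of cut-vertices that are the unique cut-vertex of some block of G, and D2 is the set of cut-vertices having at least two neighbors which are not cut-vertices and which belong to different blocks of G. -/

import Mathlib

open SimpleGraph

namespace TotalDom

variable {V : Type*}

/-- The closed neighborhood `N[v]` of a vertex. -/
def cnbr (G : SimpleGraph V) (v : V) : Set V := insert v (G.neighborSet v)

/-- `S` is a dominating set: every vertex outside `S` has a neighbor in `S`. -/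
def IsDomSet (G : SimpleGraph V) (S : Set V) : Prop := ∀ v ∉ S, ∃ u ∈ S, G.Adj u v

/-- `S` is a total dominating set: every vertex has a neighbor in `S`. -/
def IsTotalDomSet (G : SimpleGraph V) (S : Set V) : Prop := ∀ v : V, ∃ u ∈ S, G.Adj u v

/-- The domination number `γ(G)`. -/
noncomputable def domNum (G : SimpleGraph V) : ℕ :=
  sInf {n | ∃ S : Set V, IsDomSet G S ∧ S.ncard = n}

/-- The total domination number `γₜ(G)`. -/
noncomputable def totalDomNum (G : SimpleGraph V) : ℕ :=
  sInf {n | ∃ S : Set V, IsTotalDomSet G S ∧ S.ncard = n}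

/-- A minimum dominating set (γ-set). -/
def IsMinDomSet (G : SimpleGraph V) (S : Set V) : Prop := IsDomSet G S ∧ S.ncard = domNum G

/-- `S` is a packing: closed neighborhoods of distinct members are disjoint. -/
def IsPacking (G : SimpleGraph V) (S : Set V) : Prop :=
  S.Pairwise fun u v => Disjoint (cnbr G u) (cnbr G v)

/-- `M(v)`: neighbors of `v` having a neighbor outside `N[v]`. -/
def Mset (G : SimpleGraph V) (v : V) : Set V :=
  {u | G.Adj v u ∧ ∃ w, G.Adj u w ∧ w ∉ cnbr G v}

/-- `D(v)`: neighbors `u` of `v` that are not true twins of `v` with `N[u] ⊆ N[v]`. -/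
def Dset (G : SimpleGraph V) (v : V) : Set V :=
  {u | G.Adj v u ∧ cnbr G u ≠ cnbr G v ∧ cnbr G u ⊆ cnbr G v}

/-- `T(v)`: `v` together with its true twins. -/
def Tset (G : SimpleGraph V) (v : V) : Set V := {u | cnbr G u = cnbr G v}

/-- A non-isolated vertex `v` is special if no `u ∈ M(v)` satisfies `D(v) ⊆ N(u)`. -/
def Special (G : SimpleGraph V) (v : V) : Prop :=
  (G.neighborSet v).Nonempty ∧ ¬ ∃ u ∈ Mset G v, Dset G v ⊆ G.neighborSet u

/-- An `S(G)`-set: a set of special vertices containing exactly one vertex from each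
true-twin equivalence class of special vertices. -/
def IsSGSet (G : SimpleGraph V) (S : Set V) : Prop :=
  (∀ u ∈ S, Special G u) ∧ ∀ v, Special G v → ∃! u, u ∈ S ∧ u ∈ Tset G v

/-- `G` has no isolated vertices. -/
def NoIsolated (G : SimpleGraph V) : Prop := ∀ v : V, ∃ u, G.Adj v u

/-- `G` contains no induced copy of `H`. -/
def Free {α : Type*} (H : SimpleGraph α) (G : SimpleGraph V) : Prop := IsEmpty (H ↪g G)

/-- `H₁`: a 6-cycle plus one chord between vertices at distance two along the cycle. -/
def H1 : SimpleGraph (Fin 6) := cycleGraph 6 ⊔ fromEdgeSet {s(0, 2)}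

/-- `H₂`: a 6-cycle `x₁x₂x₃x₄x₅x₆` plus the chords `x₂x₆` and `x₃x₅`. -/
def H2 : SimpleGraph (Fin 6) := cycleGraph 6 ⊔ fromEdgeSet {s(1, 5), s(2, 4)}

/-- A leaf: a vertex of degree one. -/
def IsLeaf (G : SimpleGraph V) (v : V) : Prop := ∃! u, G.Adj v u

/-- A support vertex: a vertex adjacent to a leaf. -/
def IsSupport (G : SimpleGraph V) (v : V) : Prop := ∃ u, G.Adj v u ∧ IsLeaf G u

/-- `sup(G)`: the set of support vertices. -/
def supSet (G : SimpleGraph V) : Set V := {v | IsSupport G v}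

/-- `v` is a cut-vertex: deleting `v` disconnects `G`. -/
def IsCutVertex (G : SimpleGraph V) (v : V) : Prop :=
  ¬ (G.induce ({v}ᶜ : Set V)).Preconnected

/-- The subgraph of `G` induced on `B` has no cut-vertex of its own. -/
def NoCutVertexWithin (G : SimpleGraph V) (B : Set V) : Prop :=
  ∀ v ∈ B, (B \ {v}).Nonempty → (G.induce (B \ {v})).Connected

/-- `B` is a block of `G`: a maximal vertex set inducing a connected subgraph without a
cut-vertex (a maximal 2-connected subgraph or a `K₂`). -/
def IsBlock (G : SimpleGraph V) (B : Set V) : Prop :=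
  (B.Nonempty ∧ (G.induce B).Connected ∧ NoCutVertexWithin G B) ∧
    ∀ B' : Set V, B'.Nonempty → (G.induce B').Connected → NoCutVertexWithin G B' →
      B ⊆ B' → B = B'

/-- `G` is a block graph: every block of `G` is complete. -/
def IsBlockGraph (G : SimpleGraph V) : Prop :=
  ∀ B : Set V, IsBlock G B → ∀ u ∈ B, ∀ v ∈ B, u ≠ v → G.Adj u v

/-- `D₁`: the cut-vertices that constitute the unique cut-vertex in some block of `G`. -/
def D1set (G : SimpleGraph V) : Set V :=
  {v | IsCutVertex G v ∧ ∃ B : Set V, IsBlock G B ∧ v ∈ B ∧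
    ∀ u ∈ B, IsCutVertex G u → u = v}

/-- `D₂`: the cut-vertices having at least two neighbors which are not cut-vertices and
belong to different blocks of `G`. -/
def D2set (G : SimpleGraph V) : Set V :=
  {v | IsCutVertex G v ∧ ∃ x y : V, x ≠ y ∧ G.Adj v x ∧ G.Adj v y ∧
    ¬ IsCutVertex G x ∧ ¬ IsCutVertex G y ∧
    ∃ Bx By : Set V, IsBlock G Bx ∧ IsBlock G By ∧ x ∈ Bx ∧ y ∈ By ∧ Bx ≠ By}


section Aux

open SimpleGraph

variable {V : Type*} {G : SimpleGraph V}






/-- A "good" set: candidate block. -/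
def Good (G : SimpleGraph V) (B : Set V) : Prop :=
  B.Nonempty ∧ (G.induce B).Connected ∧ NoCutVertexWithin G B

lemma mem_cnbr {u v : V} : u ∈ cnbr G v ↔ u = v ∨ G.Adj v u := by
  simp [cnbr, neighborSet]

lemma self_mem_cnbr (v : V) : v ∈ cnbr G v := by simp [cnbr]

lemma mem_cnbr_of_adj {u v : V} (h : G.Adj v u) : u ∈ cnbr G v := mem_cnbr.2 (Or.inr h)

/-- connectivity via a hub vertex adjacent (or equal) to everything. -/
lemma connected_of_hub {S : Set V} {z : V} (hz : z ∈ S)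
    (h : ∀ x ∈ S, x = z ∨ G.Adj z x) : (G.induce S).Connected := by
  have : Nonempty S := ⟨⟨z, hz⟩⟩
  refine ⟨fun x y => ?_⟩
  have key : ∀ x : S, (G.induce S).Reachable x ⟨z, hz⟩ := by
    intro x
    rcases h x x.2 with h1 | h1
    · have : x = (⟨z, hz⟩ : S) := Subtype.ext h1
      rw [this]
    · exact Adj.reachable (by exact h1.symm : (G.induce S).Adj x ⟨z, hz⟩)
  exact (key x).trans (key y).symm



/-- Cliques (as vertex sets) are good. -/
lemma good_of_clique {K : Set V} (hne : K.Nonempty)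
    (hK : ∀ x ∈ K, ∀ y ∈ K, x ≠ y → G.Adj x y) : Good G K := by
  obtain ⟨z, hz⟩ := hne
  refine ⟨⟨z, hz⟩, connected_of_hub hz ?_, ?_⟩
  · intro x hx
    by_cases h : x = z
    · exact Or.inl h
    · exact Or.inr (hK z hz x hx (Ne.symm h))
  · intro v hv ⟨w, hw⟩
    refine connected_of_hub (z := w) hw ?_
    intro x hx
    by_cases h : x = w
    · exact Or.inl h
    · exact Or.inr (hK w hw.1 x hx.1 (Ne.symm h))

lemma good_singleton (v : V) : Good G {v} :=
  good_of_clique ⟨v, rfl⟩ (by rintro x rfl y rfl h; exact absurd rfl h)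

/-- Every good set extends to a block. -/
lemma exists_block_superset {B : Set V} [Fintype V] (hB : Good G B) :
    ∃ C : Set V, IsBlock G C ∧ B ⊆ C := by
  classical
  have hfin : ({C : Set V | Good G C ∧ B ⊆ C}).Finite := Set.toFinite _
  obtain ⟨C, ⟨hCg, hBC⟩, hmax⟩ :=
    hfin.exists_maximal ⟨B, hB, subset_refl B⟩
  refine ⟨C, ⟨⟨hCg.1, hCg.2.1, hCg.2.2⟩, ?_⟩, hBC⟩
  intro C' h1 h2 h3 hsub
  exact Set.Subset.antisymm hsub (hmax ⟨⟨h1, h2, h3⟩, hBC.trans hsub⟩ hsub)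

lemma exists_block_mem [Fintype V] (v : V) : ∃ C : Set V, IsBlock G C ∧ v ∈ C := by
  obtain ⟨C, hC, h⟩ := exists_block_superset (good_singleton v)
  exact ⟨C, hC, h rfl⟩

/-- Blocks of a block graph are cliques. -/
lemma block_clique (hbg : IsBlockGraph G) {B : Set V} (hB : IsBlock G B) :
    ∀ x ∈ B, ∀ y ∈ B, x ≠ y → G.Adj x y := hbg B hB

/-- Two blocks sharing two distinct vertices are equal (in a block graph). -/
lemma block_eq_of_two_mem (hbg : IsBlockGraph G) {B1 B2 : Set V} (h1 : IsBlock G B1)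
    (h2 : IsBlock G B2) {u v : V} (huv : u ≠ v) (hu1 : u ∈ B1) (hv1 : v ∈ B1)
    (hu2 : u ∈ B2) (hv2 : v ∈ B2) : B1 = B2 := by
  have hc1 := block_clique hbg h1
  have hc2 := block_clique hbg h2
  have hub : ∀ z ∈ ({u, v} : Set V), ∀ x ∈ B1 ∪ B2, x ≠ z → G.Adj z x := by
    intro z hz x hx hxz
    rcases Set.mem_insert_iff.1 hz with rfl | hz
    · rcases hx with hx | hx
      · exact (hc1 x hx z hu1 hxz).symm
      · exact (hc2 x hx z hu2 hxz).symm
    · rcases Set.mem_singleton_iff.1 hz with rfl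
      rcases hx with hx | hx
      · exact (hc1 x hx z hv1 hxz).symm
      · exact (hc2 x hx z hv2 hxz).symm
  have hgood : Good G (B1 ∪ B2) := by
    refine ⟨⟨u, Or.inl hu1⟩, connected_of_hub (z := u) (Or.inl hu1) ?_, ?_⟩
    · intro x hx
      by_cases h : x = u
      · exact Or.inl h
      · exact Or.inr (hub u (Or.inl rfl) x hx h)
    · intro w hw hne
      have : ∃ z, z ∈ ({u, v} : Set V) ∧ z ≠ w ∧ z ∈ B1 ∪ B2 := by
        by_cases h : w = u
        · exact ⟨v, Or.inr rfl, by rw [h]; exact huv.symm, Or.inl hv1⟩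
        · exact ⟨u, Or.inl rfl, fun he => h he.symm, Or.inl hu1⟩
      obtain ⟨z, hz, hzw, hzm⟩ := this
      refine connected_of_hub (z := z) ⟨hzm, hzw⟩ ?_
      intro x hx
      by_cases h : x = z
      · exact Or.inl h
      · exact Or.inr (hub z hz x hx.1 h)
  have e1 : B1 = B1 ∪ B2 := h1.2 _ hgood.1 hgood.2.1 hgood.2.2 Set.subset_union_left
  have e2 : B2 = B1 ∪ B2 := h2.2 _ hgood.1 hgood.2.1 hgood.2.2 Set.subset_union_right
  exact e1.trans e2.symm



/-- A walk with support inside `T` yields reachability in the induced graph. -/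
lemma reachable_induce_of_walk {T : Set V} {a b : V} (p : G.Walk a b)
    (h : ∀ x ∈ p.support, x ∈ T) :
    (G.induce T).Reachable ⟨a, h a p.start_mem_support⟩ ⟨b, h b p.end_mem_support⟩ := by
  induction p with
  | nil => rfl
  | @cons x c y hadj q ih =>
    have hc : c ∈ T := h c (by simp)
    have h' : ∀ z ∈ q.support, z ∈ T := fun z hz => h z (by simp [hz])
    have step : (G.induce T).Adj ⟨x, h x (by simp)⟩ ⟨c, hc⟩ := hadj
    exact (step.reachable).trans (ih h')

/-- Reachability in an induced graph yields a walk in `G` with support inside `T`. -/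
lemma exists_walk_of_reachable_induce {T : Set V} {a b : T}
    (h : (G.induce T).Reachable a b) :
    ∃ p : G.Walk a b, ∀ x ∈ p.support, x ∈ T := by
  obtain ⟨q⟩ := h
  refine ⟨q.map (Embedding.induce T).toHom, ?_⟩
  intro x hx
  have hx := Eq.mp (congrArg (x ∈ ·) (Walk.support_map (Embedding.induce T).toHom q)) hx
  rw [List.mem_map] at hx
  obtain ⟨y, _, rfl⟩ := hx
  exact y.2

lemma exists_adj (hconn : G.Connected) {v x : V} (hx : x ≠ v) : ∃ u, G.Adj v u := by
  obtain ⟨p⟩ := hconn.preconnected v x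
  cases p with
  | nil => exact absurd rfl hx.symm
  | cons h q => exact ⟨_, h⟩



/-- If the closed neighborhood of `v` is a clique, `v` is not a cut vertex. -/
lemma not_cut_of_clique_cnbr (hconn : G.Connected) {v : V}
    (hcl : ∀ x ∈ cnbr G v, ∀ y ∈ cnbr G v, x ≠ y → G.Adj x y) :
    ¬ IsCutVertex G v := by
  intro hcut
  apply hcut
  rintro ⟨x, hx⟩ ⟨y, hy⟩
  have hyv : y ≠ v := hy
  have key : ∀ n : ℕ, ∀ x : V, ∀ hx : x ≠ v, ∀ p : G.Walk x y, p.length ≤ n →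
      (G.induce ({v}ᶜ : Set V)).Reachable ⟨x, hx⟩ ⟨y, hyv⟩ := by
    intro n
    induction n with
    | zero =>
      intro x hx p hp
      have : p.length = 0 := Nat.le_zero.1 hp
      have hxy : x = y := (SimpleGraph.Walk.eq_of_length_eq_zero this)
      subst hxy
      rfl
    | succ n ih =>
      intro x hx p hp
      cases p with
      | nil => rfl
      | @cons _ c _ hadj q =>
        by_cases hcv : c = v
        · cases q with
          | nil => exact absurd hcv hyv
          | @cons _ d _ hadj2 q2 =>
            have hd : d ≠ v := fun h => hadj2.ne (hcv.trans h.symm)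
            have hxc : x ∈ cnbr G v := mem_cnbr_of_adj (hcv ▸ hadj).symm
            have hdc : d ∈ cnbr G v := mem_cnbr_of_adj (hcv ▸ hadj2)
            have hq2 : q2.length ≤ n := by
              simp only [Walk.length_cons] at hp
              omega
            by_cases hxd : x = d
            · subst hxd
              exact ih x hx q2 hq2
            · have hadj3 : G.Adj x d := hcl x hxc d hdc hxd
              have step : (G.induce ({v}ᶜ : Set V)).Adj ⟨x, hx⟩ ⟨d, hd⟩ := hadj3
              exact step.reachable.trans (ih d hd q2 hq2)
        · have step : (G.induce ({v}ᶜ : Set V)).Adj ⟨x, hx⟩ ⟨c, hcv⟩ := hadj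
          have hq : q.length ≤ n := by
            simp only [Walk.length_cons] at hp
            omega
          exact step.reachable.trans (ih c hcv q hq)
  obtain ⟨p⟩ := hconn.preconnected x y
  exact key p.length x hx p le_rfl

/-- A cut vertex `u` adjacent to `v` has a neighbor outside `N[v]`. -/
lemma exists_nbr_outside (hconn : G.Connected) {u v : V} (hcut : IsCutVertex G u)
    (hadj : G.Adj u v) : ∃ w, G.Adj u w ∧ w ∉ cnbr G v := by
  classical
  have hvu : v ≠ u := hadj.ne'
  -- find a vertex x ≠ u not reachable to v in G - u
  have hex : ∃ x : V, ∃ hx : x ≠ u,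
      ¬ (G.induce ({u}ᶜ : Set V)).Reachable ⟨x, hx⟩ ⟨v, hvu⟩ := by
    rw [IsCutVertex, SimpleGraph.Preconnected] at hcut
    push_neg at hcut
    obtain ⟨⟨a, ha⟩, ⟨b, hb⟩, hab⟩ := hcut
    by_cases h1 : (G.induce ({u}ᶜ : Set V)).Reachable ⟨a, ha⟩ ⟨v, hvu⟩
    · by_cases h2 : (G.induce ({u}ᶜ : Set V)).Reachable ⟨b, hb⟩ ⟨v, hvu⟩
      · exact absurd (h1.trans h2.symm) hab
      · exact ⟨b, hb, h2⟩
    · exact ⟨a, ha, h1⟩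
  obtain ⟨x, hx, hnr⟩ := hex
  obtain ⟨p⟩ := hconn.preconnected x v
  -- walk induction: find a neighbor w of u with ¬Reachable w v in G - u
  have key : ∀ n : ℕ, ∀ x : V, ∀ p : G.Walk x v, p.length ≤ n → ∀ hx : x ≠ u,
      ¬ (G.induce ({u}ᶜ : Set V)).Reachable ⟨x, hx⟩ ⟨v, hvu⟩ →
      ∃ w, ∃ hw : w ≠ u, G.Adj u w ∧
        ¬ (G.induce ({u}ᶜ : Set V)).Reachable ⟨w, hw⟩ ⟨v, hvu⟩ := by
    intro n
    induction n with
    | zero =>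
      intro x p hp hx hnr
      have hxy : x = v := Walk.eq_of_length_eq_zero (Nat.le_zero.1 hp)
      subst hxy
      exact absurd (by rfl) hnr
    | succ n ih =>
      intro x p hp hx hnr
      cases p with
      | nil => exact absurd (by rfl) hnr
      | @cons _ c _ hadj q =>
        by_cases hcu : c = u
        · exact ⟨x, hx, (hcu ▸ hadj).symm, hnr⟩
        · by_cases hr : (G.induce ({u}ᶜ : Set V)).Reachable ⟨c, hcu⟩ ⟨v, hvu⟩
          · have step : (G.induce ({u}ᶜ : Set V)).Adj ⟨x, hx⟩ ⟨c, hcu⟩ := hadj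
            exact absurd (step.reachable.trans hr) hnr
          · refine ih c q ?_ hcu hr
            simp only [Walk.length_cons] at hp
            omega
  obtain ⟨w, hw, hadjw, hnrw⟩ := key p.length x p le_rfl hx hnr
  refine ⟨w, hadjw, ?_⟩
  intro hmem
  rcases mem_cnbr.1 hmem with rfl | hvw
  · exact hnrw (by rfl)
  · have step : (G.induce ({u}ᶜ : Set V)).Adj ⟨w, hw⟩ ⟨v, hvu⟩ := hvw.symm
    exact hnrw step.reachable


lemma eq_of_end_mem_takeUntil [DecidableEq V] {a c y : V} {q : G.Walk a c}
    (hq : q.IsPath) (hy : y ∈ q.support) (hx : c ∈ (q.takeUntil y hy).support) :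
    c = y := by
  by_contra hne
  have hspec := q.take_spec hy
  have hnodup : q.support.Nodup := hq.support_nodup
  rw [← hspec, Walk.support_append] at hnodup
  have hdisj := List.disjoint_of_nodup_append hnodup
  have hcd : c ∈ (q.dropUntil y hy).support := Walk.end_mem_support _
  have : c ∈ (q.dropUntil y hy).support.tail := by
    have := Walk.support_eq_cons (q.dropUntil y hy)
    rw [this] at hcd
    rcases List.mem_cons.1 hcd with h | h
    · exact absurd h hne
    · exact h
  exact hdisj hx this

/-- The vertex set of a cycle (apex `v` + path `p` between two neighbors of `v`)
is a good set. -/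
lemma apex_path_good [DecidableEq V] {v a b : V} {p : G.Walk a b} (hp : p.IsPath)
    (hv : v ∉ p.support) (ha : G.Adj v a) (hb : G.Adj v b) :
    Good G (insert v {x | x ∈ p.support}) := by
  set S : Set V := insert v {x | x ∈ p.support} with hS
  have hvS : v ∈ S := Set.mem_insert _ _
  have hsubS : ∀ x ∈ p.support, x ∈ S := fun x hx => Set.mem_insert_of_mem _ hx
  have haS : a ∈ S := hsubS a p.start_mem_support
  have hbS : b ∈ S := hsubS b p.end_mem_support
  -- reachability to an endpoint along a (sub)walk
  have reach_of_walk : ∀ (T : Set V) (c d : V) (w : G.Walk c d)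
      (hw : ∀ x ∈ w.support, x ∈ T),
      (G.induce T).Reachable ⟨c, hw c w.start_mem_support⟩ ⟨d, hw d w.end_mem_support⟩ :=
    fun T c d w hw => reachable_induce_of_walk w hw
  refine ⟨⟨v, hvS⟩, ?_, ?_⟩
  · -- connectivity of S
    have : Nonempty S := ⟨⟨v, hvS⟩⟩
    refine ⟨fun x y => ?_⟩
    have key : ∀ z : S, (G.induce S).Reachable z ⟨v, hvS⟩ := by
      rintro ⟨z, hz⟩
      rcases Set.mem_insert_iff.1 hz with rfl | hz'
      · rfl
      · have hz'' : z ∈ p.support := hz'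
        have r1 : (G.induce S).Reachable ⟨a, haS⟩ ⟨z, hz⟩ := by
          have hsub : ∀ x ∈ (p.takeUntil z hz'').support, x ∈ S :=
            fun x hx => hsubS x (Walk.support_takeUntil_subset _ _ hx)
          exact reachable_induce_of_walk (p.takeUntil z hz'') hsub
        have r2 : (G.induce S).Adj ⟨v, hvS⟩ ⟨a, haS⟩ := ha
        exact (r1.symm.trans r2.symm.reachable).symm.symm
    exact (key x).trans (key y).symm
  · -- no cut vertex within S
    intro x hxS hne
    rcases Set.mem_insert_iff.1 hxS with rfl | hxp
    · -- removing the apex: the path remains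
      have haS' : a ∈ S \ {x} := ⟨haS, fun h => hv (by rw [← h]; exact p.start_mem_support)⟩
      have : Nonempty ↥(S \ {x}) := ⟨⟨a, haS'⟩⟩
      refine ⟨fun y z => ?_⟩
      have key : ∀ w : ↥(S \ {x}), (G.induce (S \ {x})).Reachable w ⟨a, haS'⟩ := by
        rintro ⟨w, hw, hwx⟩
        rcases Set.mem_insert_iff.1 hw with rfl | hw'
        · exact absurd rfl hwx
        · have hw'' : w ∈ p.support := hw'
          have hsub : ∀ z ∈ (p.takeUntil w hw'').support, z ∈ S \ {x} := by
            intro z hz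
            have hzp : z ∈ p.support := Walk.support_takeUntil_subset _ _ hz
            exact ⟨hsubS z hzp, fun h => hv (h ▸ hzp)⟩
          exact (reachable_induce_of_walk (p.takeUntil w hw'') hsub).symm
      exact (key y).trans (key z).symm
    · -- removing a path vertex x : connect everything to v
      have hxp' : x ∈ p.support := hxp
      have hxv : x ≠ v := fun h => hv (h ▸ hxp')
      have hvS' : v ∈ S \ {x} := ⟨hvS, fun h => hxv (Set.mem_singleton_iff.1 h).symm⟩
      set q := p.takeUntil x hxp' with hq
      set r := p.dropUntil x hxp' with hr
      have hqpath : q.IsPath := hp.takeUntil hxp'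
      have hrpath : r.IsPath := hp.dropUntil hxp'
      have hsplit : ∀ y ∈ p.support, y ∈ q.support ∨ y ∈ r.support := by
        intro y hy
        rw [← p.take_spec hxp', Walk.support_append] at hy
        rcases List.mem_append.1 hy with h | h
        · exact Or.inl h
        · exact Or.inr (List.mem_of_mem_tail h)
      have : Nonempty ↥(S \ {x}) := ⟨⟨v, hvS'⟩⟩
      refine ⟨fun y z => ?_⟩
      have key : ∀ w : ↥(S \ {x}), (G.induce (S \ {x})).Reachable w ⟨v, hvS'⟩ := by
        rintro ⟨w, hw, hwx⟩
        have hwx' : w ≠ x := hwx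
        rcases Set.mem_insert_iff.1 hw with rfl | hw'
        · rfl
        · have hw'' : w ∈ p.support := hw'
          rcases hsplit w hw'' with hmem | hmem
          · -- w on the first part q : a → x ; go back to a then to v
            have hax : a ≠ x := by
              intro h
              subst h
              have : q = Walk.nil := Walk.isPath_iff_eq_nil.1 hqpath
              rw [this] at hmem
              simp at hmem
              exact hwx' hmem
            have haS' : a ∈ S \ {x} := ⟨haS, hax⟩
            have havoid : x ∉ (q.takeUntil w hmem).support := by
              intro hmem2
              exact hwx' (eq_of_end_mem_takeUntil hqpath hmem hmem2).symm
            have hsub : ∀ z ∈ (q.takeUntil w hmem).support, z ∈ S \ {x} := by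
              intro z hz
              have hzq : z ∈ q.support := Walk.support_takeUntil_subset _ _ hz
              have hzp : z ∈ p.support := Walk.support_takeUntil_subset p hxp' hzq
              exact ⟨hsubS z hzp, fun h => havoid ((Set.mem_singleton_iff.1 h) ▸ hz)⟩
            have r1 : (G.induce (S \ {x})).Reachable ⟨a, haS'⟩ ⟨w, hw, hwx⟩ :=
              reachable_induce_of_walk (q.takeUntil w hmem) hsub
            have r2 : (G.induce (S \ {x})).Adj ⟨v, hvS'⟩ ⟨a, haS'⟩ := ha
            exact r1.symm.trans r2.symm.reachable
          · -- w on the second part r : x → b ; go forward to b then to v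
            have hmemrev : w ∈ r.reverse.support := by
              rw [Walk.support_reverse]; exact List.mem_reverse.2 hmem
            have hbx : b ≠ x := by
              intro h
              subst h
              have : r = Walk.nil := Walk.isPath_iff_eq_nil.1 hrpath
              rw [this] at hmem
              simp at hmem
              exact hwx' hmem
            have hbS' : b ∈ S \ {x} := ⟨hbS, hbx⟩
            have havoid : x ∉ (r.reverse.takeUntil w hmemrev).support := by
              intro hmem2
              exact hwx' (eq_of_end_mem_takeUntil hrpath.reverse hmemrev hmem2).symm
            have hsub : ∀ z ∈ (r.reverse.takeUntil w hmemrev).support, z ∈ S \ {x} := by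
              intro z hz
              have hzr : z ∈ r.reverse.support := Walk.support_takeUntil_subset _ _ hz
              have hzr' : z ∈ r.support := by
                rw [Walk.support_reverse] at hzr; exact List.mem_reverse.1 hzr
              have hcases : z = x ∨ z ∈ r.support.tail := by
                have h0 := hzr'
                rw [Walk.support_eq_cons r] at h0
                exact List.mem_cons.1 h0
              rcases hcases with rfl | htl
              · exact absurd hz havoid
              have hzp : z ∈ p.support := by
                rw [← p.take_spec hxp', Walk.support_append]
                exact List.mem_append.2 (Or.inr htl)
              exact ⟨hsubS z hzp, fun h => havoid ((Set.mem_singleton_iff.1 h) ▸ hz)⟩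
            have r1 : (G.induce (S \ {x})).Reachable ⟨b, hbS'⟩ ⟨w, hw, hwx⟩ :=
              reachable_induce_of_walk (r.reverse.takeUntil w hmemrev) hsub
            have r2 : (G.induce (S \ {x})).Adj ⟨v, hvS'⟩ ⟨b, hbS'⟩ := hb
            exact r1.symm.trans r2.symm.reachable
      exact (key y).trans (key z).symm



/-- In a connected block graph, the closed neighborhood of a non-cut vertex is a clique. -/
lemma cnbr_clique_of_not_cut [Fintype V] (hconn : G.Connected) (hbg : IsBlockGraph G)
    {v : V} (h : ¬ IsCutVertex G v) :
    ∀ x ∈ cnbr G v, ∀ y ∈ cnbr G v, x ≠ y → G.Adj x y := by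
  classical
  intro x hx y hy hxy
  rcases mem_cnbr.1 hx with rfl | hax
  · rcases mem_cnbr.1 hy with rfl | hay
    · exact absurd rfl hxy
    · exact hay
  · rcases mem_cnbr.1 hy with rfl | hay
    · exact hax.symm
    · -- both are genuine neighbors
      have hxv : x ≠ v := hax.ne'
      have hyv : y ≠ v := hay.ne'
      have hpre : (G.induce ({v}ᶜ : Set V)).Preconnected := not_not.1 h
      obtain ⟨p0, hp0⟩ := exists_walk_of_reachable_induce
        (hpre ⟨x, hxv⟩ ⟨y, hyv⟩)
      set p : G.Walk x y := p0.bypass with hp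
      have hpath : p.IsPath := Walk.bypass_isPath p0
      have hvp : v ∉ p.support := by
        intro hmem
        exact (hp0 v (Walk.support_bypass_subset p0 hmem)) rfl
      have hgood := apex_path_good (G := G) hpath hvp hax hay
      obtain ⟨C, hC, hsub⟩ := exists_block_superset hgood
      exact hbg C hC x (hsub (Set.mem_insert_of_mem _ p.start_mem_support))
        y (hsub (Set.mem_insert_of_mem _ p.end_mem_support)) hxy

/-- The closed neighborhood of a non-cut vertex is a block. -/
lemma cnbr_block_of_not_cut [Fintype V] (hconn : G.Connected) (hbg : IsBlockGraph G)
    {v : V} (h : ¬ IsCutVertex G v) : IsBlock G (cnbr G v) := by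
  have hcl := cnbr_clique_of_not_cut hconn hbg h
  have hgood : Good G (cnbr G v) := good_of_clique ⟨v, self_mem_cnbr v⟩ hcl
  obtain ⟨C, hC, hsub⟩ := exists_block_superset hgood
  have hCsub : C ⊆ cnbr G v := by
    intro y hy
    by_cases hyv : y = v
    · rw [hyv]; exact self_mem_cnbr v
    · exact mem_cnbr_of_adj (hbg C hC v (hsub (self_mem_cnbr v)) y hy (Ne.symm hyv))
  have : C = cnbr G v := Set.Subset.antisymm hCsub hsub
  exact this ▸ hC

/-- Any block containing a non-cut vertex is its closed neighborhood. -/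
lemma block_eq_cnbr_of_not_cut [Fintype V] (hconn : G.Connected) (hbg : IsBlockGraph G)
    {v : V} {B : Set V} (h : ¬ IsCutVertex G v) (hB : IsBlock G B) (hv : v ∈ B) :
    B = cnbr G v := by
  have hblk := cnbr_block_of_not_cut hconn hbg h
  have hsub : B ⊆ cnbr G v := by
    intro y hy
    by_cases hyv : y = v
    · rw [hyv]; exact self_mem_cnbr v
    · exact mem_cnbr_of_adj (hbg B hB v hv y hy (Ne.symm hyv))
  exact hB.2 _ hblk.1.1 hblk.1.2.1 hblk.1.2.2 hsub

/-- `M(v)` is the set of cut vertices adjacent to `v`. -/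
lemma mset_eq [Fintype V] (hconn : G.Connected) (hbg : IsBlockGraph G) (v : V) :
    Mset G v = {u | G.Adj v u ∧ IsCutVertex G u} := by
  ext u
  constructor
  · rintro ⟨hadj, w, huw, hw⟩
    refine ⟨hadj, ?_⟩
    by_contra hnc
    have hcl := cnbr_clique_of_not_cut hconn hbg hnc
    have hvw : v ≠ w := fun h => hw (h ▸ self_mem_cnbr v)
    have : G.Adj v w := hcl v (mem_cnbr_of_adj hadj.symm) w (mem_cnbr_of_adj huw) hvw
    exact hw (mem_cnbr_of_adj this)
  · rintro ⟨hadj, hcut⟩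
    obtain ⟨w, hw1, hw2⟩ := exists_nbr_outside hconn hcut hadj.symm
    exact ⟨hadj, w, hw1, hw2⟩

/-- For a cut vertex `v`, `D(v)` is the set of non-cut vertices adjacent to `v`. -/
lemma dset_eq [Fintype V] (hconn : G.Connected) (hbg : IsBlockGraph G) {v : V}
    (hv : IsCutVertex G v) :
    Dset G v = {u | G.Adj v u ∧ ¬ IsCutVertex G u} := by
  ext u
  constructor
  · rintro ⟨hadj, hne, hsub⟩
    refine ⟨hadj, ?_⟩
    intro hcut
    obtain ⟨w, hw1, hw2⟩ := exists_nbr_outside hconn hcut hadj.symm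
    exact hw2 (hsub (mem_cnbr_of_adj hw1))
  · rintro ⟨hadj, hnc⟩
    have hcl := cnbr_clique_of_not_cut hconn hbg hnc
    refine ⟨hadj, ?_, ?_⟩
    · intro heq
      exact (not_cut_of_clique_cnbr hconn (heq ▸ hcl)) hv
    · intro z hz
      rcases mem_cnbr.1 hz with rfl | hadjz
      · exact mem_cnbr_of_adj hadj
      · by_cases hzv : z = v
        · rw [hzv]; exact self_mem_cnbr v
        · exact mem_cnbr_of_adj
            ((hcl v (mem_cnbr_of_adj hadj.symm) z (mem_cnbr_of_adj hadjz) (Ne.symm hzv)))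

lemma closed_walk {T : Set V} (hcl : ∀ y ∈ T, ∀ z, G.Adj y z → z ∈ T) {c z : V}
    (p : G.Walk c z) (hc : c ∈ T) : z ∈ T := by
  induction p with
  | nil => exact hc
  | cons h q ih => exact ih (hcl _ hc _ h)

lemma exists_ne_of_cut {v : V} (h : IsCutVertex G v) : ∃ x, x ≠ v := by
  rw [IsCutVertex, SimpleGraph.Preconnected] at h
  push_neg at h
  obtain ⟨⟨a, ha⟩, _, _⟩ := h
  exact ⟨a, ha⟩

/-- Every block contains at least two vertices (in a nontrivial connected graph). -/
lemma block_two_elems [Fintype V] (hconn : G.Connected) (hnt : ∃ x y : V, x ≠ y)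
    {B : Set V} (hB : IsBlock G B) {w : V} (hw : w ∈ B) : ∃ y ∈ B, y ≠ w := by
  by_contra hno
  push_neg at hno
  have hBw : B = {w} := Set.Subset.antisymm (fun y hy => hno y hy) (fun y hy => hy ▸ hw)
  obtain ⟨x, y, hxy⟩ := hnt
  have : ∃ z, z ≠ w := by
    by_cases h : x = w
    · exact ⟨y, fun hyw => hxy (h.symm ▸ hyw ▸ rfl)⟩
    · exact ⟨x, h⟩
  obtain ⟨z, hz⟩ := this
  obtain ⟨u, hu⟩ := exists_adj hconn hz
  have hgood : Good G ({w, u} : Set V) := by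
    refine good_of_clique ⟨w, Or.inl rfl⟩ ?_
    rintro a (rfl | ha) b (rfl | hb) hab
    · exact absurd rfl hab
    · rcases hb with rfl; exact hu
    · rcases ha with rfl; exact hu.symm
    · rcases ha with rfl; rcases hb with rfl; exact absurd rfl hab
  have := hB.2 _ hgood.1 hgood.2.1 hgood.2.2 (by rw [hBw]; exact Set.singleton_subset_iff.2 (Or.inl rfl))
  rw [hBw] at this
  have : u ∈ ({w} : Set V) := this ▸ (Or.inr rfl : u ∈ ({w, u} : Set V))
  exact hu.ne' this



/-- In a connected block graph with at least two blocks, special vertices are cut vertices. -/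
lemma cut_of_special [Fintype V] (hconn : G.Connected) (hbg : IsBlockGraph G)
    (h2b : ∃ B₁ B₂ : Set V, IsBlock G B₁ ∧ IsBlock G B₂ ∧ B₁ ≠ B₂)
    {v : V} (hsp : Special G v) : IsCutVertex G v := by
  by_contra hnc
  have hcl := cnbr_clique_of_not_cut hconn hbg hnc
  have hblk := cnbr_block_of_not_cut hconn hbg hnc
  -- Find a cut vertex in N[v]
  have hexcut : ∃ u ∈ cnbr G v, IsCutVertex G u := by
    by_contra hnone
    push_neg at hnone
    -- every vertex in N[v] has the same closed neighborhood
    have hsame : ∀ x ∈ cnbr G v, cnbr G x = cnbr G v := by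
      intro x hx
      have hxnc := hnone x hx
      have hxsub : cnbr G v ⊆ cnbr G x := by
        intro y hy
        by_cases hxy : y = x
        · rw [hxy]; exact self_mem_cnbr x
        · exact mem_cnbr_of_adj (hcl x hx y hy (fun h => hxy h.symm))
      have hxgood : Good G (cnbr G x) :=
        good_of_clique ⟨x, self_mem_cnbr x⟩ (cnbr_clique_of_not_cut hconn hbg hxnc)
      exact (hblk.2 _ hxgood.1 hxgood.2.1 hxgood.2.2 hxsub).symm
    have hclosed : ∀ y ∈ cnbr G v, ∀ z, G.Adj y z → z ∈ cnbr G v := by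
      intro y hy z hz
      rw [← hsame y hy]
      exact mem_cnbr_of_adj hz
    have huniv : ∀ z : V, z ∈ cnbr G v := by
      intro z
      obtain ⟨p⟩ := hconn.preconnected v z
      exact closed_walk hclosed p (self_mem_cnbr v)
    obtain ⟨B1, B2, hB1, hB2, hne⟩ := h2b
    have e1 : B1 = cnbr G v := hB1.2 _ hblk.1.1 hblk.1.2.1 hblk.1.2.2 (fun z _ => huniv z)
    have e2 : B2 = cnbr G v := hB2.2 _ hblk.1.1 hblk.1.2.1 hblk.1.2.2 (fun z _ => huniv z)
    exact hne (e1.trans e2.symm)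
  obtain ⟨u, hu, hucut⟩ := hexcut
  have huv : u ≠ v := fun h => hnc (h ▸ hucut)
  have hadj : G.Adj v u := by
    rcases mem_cnbr.1 hu with rfl | h
    · exact absurd rfl huv
    · exact h
  obtain ⟨w, hw1, hw2⟩ := exists_nbr_outside hconn hucut hadj.symm
  have huM : u ∈ Mset G v := ⟨hadj, w, hw1, hw2⟩
  have hDempty : Dset G v ⊆ G.neighborSet u := by
    rintro u' ⟨hadj', hne', hsub'⟩
    exfalso
    apply hne'
    refine Set.Subset.antisymm hsub' ?_
    intro y hy
    by_cases hyu : y = u'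
    · rw [hyu]; exact self_mem_cnbr u'
    · exact mem_cnbr_of_adj (hcl u' (mem_cnbr_of_adj hadj') y hy (fun h => hyu h.symm))
  exact hsp.2 ⟨u, huM, hDempty⟩

lemma special_no_twin [Fintype V] (hconn : G.Connected) (hbg : IsBlockGraph G)
    (h2b : ∃ B₁ B₂ : Set V, IsBlock G B₁ ∧ IsBlock G B₂ ∧ B₁ ≠ B₂)
    {v : V} (hsp : Special G v) : ∀ u ∈ Tset G v, u = v := by
  intro u hu
  have htw : cnbr G u = cnbr G v := hu
  by_contra hne
  have hvcut := cut_of_special hconn hbg h2b hsp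
  have hadj : G.Adj v u := by
    have : u ∈ cnbr G v := htw ▸ self_mem_cnbr u
    rcases mem_cnbr.1 this with h | h
    · exact absurd h hne
    · exact h
  obtain ⟨w, hw1, hw2⟩ := exists_nbr_outside hconn hvcut hadj
  exact hw2 (htw ▸ mem_cnbr_of_adj hw1)

lemma special_of_D1 [Fintype V] (hconn : G.Connected) (hbg : IsBlockGraph G)
    {v : V} (hv : v ∈ D1set G) : Special G v := by
  obtain ⟨hcut, B, hB, hvB, huniq⟩ := hv
  have hnt : ∃ x y : V, x ≠ y := by
    obtain ⟨x, hx⟩ := exists_ne_of_cut hcut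
    exact ⟨x, v, hx⟩
  constructor
  · obtain ⟨x, hx⟩ := exists_ne_of_cut hcut
    obtain ⟨u, hu⟩ := exists_adj hconn hx
    exact ⟨u, hu⟩
  · rintro ⟨u, huM, hDu⟩
    have hucut : IsCutVertex G u := ((mset_eq hconn hbg v) ▸ huM).2
    have hadj : G.Adj v u := ((mset_eq hconn hbg v) ▸ huM).1
    have huB : u ∉ B := fun h => hadj.ne' (huniq u h hucut)
    obtain ⟨y, hyB, hyv⟩ := block_two_elems hconn hnt hB hvB
    have hync : ¬ IsCutVertex G y := fun h => hyv (huniq y hyB h)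
    have hyadj : G.Adj v y := (hbg B hB v hvB y hyB (Ne.symm hyv)).symm.symm
    have hyD : y ∈ Dset G v := by
      rw [dset_eq hconn hbg hcut]
      exact ⟨hyadj, hync⟩
    have huy : G.Adj u y := hDu hyD
    -- triangle u v y lies in a block; that block shares v,y with B, so equals B
    have htri : Good G ({u, v, y} : Set V) := by
      refine good_of_clique ⟨u, Or.inl rfl⟩ ?_
      intro a ha b hb hab
      simp only [Set.mem_insert_iff, Set.mem_singleton_iff] at ha hb
      rcases ha with rfl | rfl | rfl <;> rcases hb with rfl | rfl | rfl <;>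
        first
          | exact absurd rfl hab
          | exact hadj.symm
          | exact hadj
          | exact huy
          | exact huy.symm
          | exact hyadj
          | exact hyadj.symm
    obtain ⟨C, hC, hsub⟩ := exists_block_superset htri
    have : C = B := block_eq_of_two_mem hbg hC hB (Ne.symm hyv)
      (hsub (Or.inr (Or.inl rfl))) (hsub (Or.inr (Or.inr rfl))) hvB hyB
    exact huB (this ▸ hsub (Or.inl rfl))

lemma special_of_D2 [Fintype V] (hconn : G.Connected) (hbg : IsBlockGraph G)
    {v : V} (hv : v ∈ D2set G) : Special G v := by
  obtain ⟨hcut, x, y, hxy, hvx, hvy, hxnc, hync, Bx, By, hBx, hBy, hxBx, hyBy, hBne⟩ := hv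
  constructor
  · exact ⟨x, hvx⟩
  · rintro ⟨u, huM, hDu⟩
    have hucut : IsCutVertex G u := ((mset_eq hconn hbg v) ▸ huM).2
    have hadj : G.Adj v u := ((mset_eq hconn hbg v) ▸ huM).1
    have hxD : x ∈ Dset G v := by rw [dset_eq hconn hbg hcut]; exact ⟨hvx, hxnc⟩
    have hyD : y ∈ Dset G v := by rw [dset_eq hconn hbg hcut]; exact ⟨hvy, hync⟩
    have hux : G.Adj u x := hDu hxD
    have huy : G.Adj u y := hDu hyD
    have ex : Bx = cnbr G x := block_eq_cnbr_of_not_cut hconn hbg hxnc hBx hxBx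
    have ey : By = cnbr G y := block_eq_cnbr_of_not_cut hconn hbg hync hBy hyBy
    have hxblk : IsBlock G (cnbr G x) := cnbr_block_of_not_cut hconn hbg hxnc
    have hyblk : IsBlock G (cnbr G y) := cnbr_block_of_not_cut hconn hbg hync
    have : cnbr G x = cnbr G y := by
      refine block_eq_of_two_mem hbg hxblk hyblk hadj.ne ?_ ?_ ?_ ?_
      · exact mem_cnbr_of_adj hvx.symm
      · exact mem_cnbr_of_adj hux.symm
      · exact mem_cnbr_of_adj hvy.symm
      · exact mem_cnbr_of_adj huy.symm
    exact hBne (ex.trans (this.trans ey.symm))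

lemma D1D2_of_special [Fintype V] (hconn : G.Connected) (hbg : IsBlockGraph G)
    (h2b : ∃ B₁ B₂ : Set V, IsBlock G B₁ ∧ IsBlock G B₂ ∧ B₁ ≠ B₂)
    {v : V} (hsp : Special G v) : v ∈ D1set G ∪ D2set G := by
  classical
  have hcut := cut_of_special hconn hbg h2b hsp
  by_contra hnot
  rw [Set.mem_union] at hnot
  push_neg at hnot
  obtain ⟨hnd1, hnd2⟩ := hnot
  have hD1' : ∀ B : Set V, IsBlock G B → v ∈ B → ∃ u ∈ B, IsCutVertex G u ∧ u ≠ v := by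
    intro B hB hvB
    by_contra hc
    push_neg at hc
    exact hnd1 ⟨hcut, B, hB, hvB, hc⟩
  have hD2' : ∀ x y : V, x ≠ y → G.Adj v x → G.Adj v y → ¬ IsCutVertex G x →
      ¬ IsCutVertex G y → ∀ Bx By : Set V, IsBlock G Bx → IsBlock G By →
      x ∈ Bx → y ∈ By → Bx = By := by
    intro x y h1 h2 h3 h4 h5 Bx By h6 h7 h8 h9
    by_contra hne
    exact hnd2 ⟨hcut, x, y, h1, h2, h3, h4, h5, Bx, By, h6, h7, h8, h9, hne⟩
  by_cases hex : ∃ x0, G.Adj v x0 ∧ ¬ IsCutVertex G x0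
  · obtain ⟨x0, hvx0, hx0nc⟩ := hex
    have hblk0 : IsBlock G (cnbr G x0) := cnbr_block_of_not_cut hconn hbg hx0nc
    have hv0 : v ∈ cnbr G x0 := mem_cnbr_of_adj hvx0.symm
    have hcl0 := cnbr_clique_of_not_cut hconn hbg hx0nc
    have hDsub : Dset G v ⊆ cnbr G x0 := by
      intro u' hu'
      have h' := (dset_eq hconn hbg hcut) ▸ hu'
      obtain ⟨hadj', hnc'⟩ := h'
      by_cases he : u' = x0
      · rw [he]; exact self_mem_cnbr x0
      · have := hD2' x0 u' (fun h => he h.symm) hvx0 hadj' hx0nc hnc'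
          (cnbr G x0) (cnbr G u') hblk0 (cnbr_block_of_not_cut hconn hbg hnc')
          (self_mem_cnbr x0) (self_mem_cnbr u')
        rw [this]
        exact self_mem_cnbr u'
    obtain ⟨u, huB, hucut, hune⟩ := hD1' (cnbr G x0) hblk0 hv0
    have hadj : G.Adj v u := hcl0 v hv0 u huB (Ne.symm hune)
    have huM : u ∈ Mset G v := by
      rw [mset_eq hconn hbg]
      exact ⟨hadj, hucut⟩
    refine hsp.2 ⟨u, huM, ?_⟩
    intro u' hu'
    have h' := (dset_eq hconn hbg hcut) ▸ hu'
    obtain ⟨hadj', hnc'⟩ := h'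
    have hu'0 : u' ∈ cnbr G x0 := hDsub hu'
    have hune' : u' ≠ u := fun h => hnc' (h ▸ hucut)
    exact (hcl0 u huB u' hu'0 (Ne.symm hune')) 
  · push_neg at hex
    obtain ⟨B, hB, hvB⟩ := exists_block_mem (G := G) v
    obtain ⟨u, huB, hucut, hune⟩ := hD1' B hB hvB
    have hadj : G.Adj v u := hbg B hB v hvB u huB (Ne.symm hune)
    have huM : u ∈ Mset G v := by
      rw [mset_eq hconn hbg]
      exact ⟨hadj, hucut⟩
    refine hsp.2 ⟨u, huM, ?_⟩
    intro u' hu'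
    have h' := (dset_eq hconn hbg hcut) ▸ hu'
    obtain ⟨hadj', hnc'⟩ := h'
    exact absurd (hex u' hadj') hnc'

end Aux

/-- In a connected block graph `G` with at least two blocks, the set of special vertices is
exactly `D₁ ∪ D₂`, no special vertex has a true twin other than itself, and `D₁ ∪ D₂` is the
unique `S(G)`-set of `G`. -/
theorem stmt13 {V : Type*} [Fintype V] (G : SimpleGraph V) (hconn : G.Connected)
    (hbg : IsBlockGraph G)
    (h2b : ∃ B₁ B₂ : Set V, IsBlock G B₁ ∧ IsBlock G B₂ ∧ B₁ ≠ B₂) :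
    ({v | Special G v} = D1set G ∪ D2set G) ∧
      (∀ v, Special G v → ∀ u ∈ Tset G v, u = v) ∧
      IsSGSet G (D1set G ∪ D2set G) ∧
      ∀ S : Set V, IsSGSet G S → S = D1set G ∪ D2set G := by
  have hpart1 : {v | Special G v} = D1set G ∪ D2set G := by
    ext v
    constructor
    · intro hsp
      exact D1D2_of_special hconn hbg h2b hsp
    · intro hv
      rcases hv with hv | hv
      · exact special_of_D1 hconn hbg hv
      · exact special_of_D2 hconn hbg hv
  have hpart2 : ∀ v, Special G v → ∀ u ∈ Tset G v, u = v := by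
    intro v hsp u hu
    exact special_no_twin hconn hbg h2b hsp u hu
  refine ⟨hpart1, hpart2, ⟨?_, ?_⟩, ?_⟩
  · intro u hu
    rcases hu with hu | hu
    · exact special_of_D1 hconn hbg hu
    · exact special_of_D2 hconn hbg hu
  · intro v hsp
    refine ⟨v, ⟨?_, rfl⟩, ?_⟩
    · have : v ∈ {v | Special G v} := hsp
      rw [hpart1] at this
      exact this
    · rintro y ⟨hyS, hyT⟩
      exact hpart2 v hsp y hyT
  · intro S hS
    apply Set.Subset.antisymm
    · intro u hu
      have hsp := hS.1 u hu
      have : u ∈ {v | Special G v} := hsp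
      rw [hpart1] at this
      exact this
    · intro v hv
      have hsp : Special G v := by
        rcases hv with h | h
        · exact special_of_D1 hconn hbg h
        · exact special_of_D2 hconn hbg h
      obtain ⟨u, ⟨huS, huT⟩, _⟩ := hS.2 v hsp
      have := hpart2 v hsp u huT
      rw [← this]
      exact huS


end TotalDom
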